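/- Let b>0. Then for all χ∈ℝ: S₂(χ) = b·S₀(χ) − χ·S₁(χ); S₃(χ) = −(b−1)·χ·S₀(χ) + (b+1+χ²)·S₁(χ); and S₄(χ) = (b(b+2)+(b−1)χ²)·S₀(χ) − ((2b+1)χ+χ³)·S₁(χ). (These are the entries k=2,3,4 of Table 1 with μ=b−1.) -/

import Mathlib

open MeasureTheory Real

/-- The canonical integrals `S_k(χ) = (1/Γ(b)) ∫₀^∞ τ^{b-1} (τ-χ)^k e^{-(τ-χ)²/2} dτ`. -/
noncomputable def S (b : ℝ) (k : ℕ) (χ : ℝ) : ℝ :=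
  (1 / Real.Gamma b) *
    ∫ τ in Set.Ioi (0 : ℝ), τ ^ (b - 1) * (τ - χ) ^ k * Real.exp (-(τ - χ) ^ 2 / 2)

section Aux

open Set Filter Topology


lemma Sbound (χ : ℝ) (k : ℕ) (s : ℝ) {τ : ℝ} (hτ : 0 < τ) :
    ‖τ ^ s * (τ - χ) ^ k * Real.exp (-(τ - χ) ^ 2 / 2)‖ ≤
      2 ^ k * Real.exp (χ ^ 2) *
        (|χ| ^ k * (τ ^ s * Real.exp (-(1/4) * τ ^ 2)) +
          τ ^ (s + k) * Real.exp (-(1/4) * τ ^ 2)) := by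
  have ht : (0:ℝ) ≤ τ ^ s := Real.rpow_nonneg hτ.le s
  have h1 : |τ - χ| ≤ τ + |χ| := by
    have h2 := le_abs_self χ; have h3 := neg_abs_le χ
    rw [abs_le]; constructor <;> linarith
  have h4 : (τ + |χ|) ^ k ≤ 2 ^ k * (|χ| ^ k + τ ^ k) := by
    have h5 : τ + |χ| ≤ 2 * max τ |χ| := by
      rcases le_total τ |χ| with h | h
      · rw [max_eq_right h]; linarith
      · rw [max_eq_left h]; linarith
    calc (τ + |χ|) ^ k ≤ (2 * max τ |χ|) ^ k := by
          apply pow_le_pow_left₀ (by positivity) h5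
      _ = 2 ^ k * (max τ |χ|) ^ k := by rw [mul_pow]
      _ ≤ 2 ^ k * (|χ| ^ k + τ ^ k) := by
          apply mul_le_mul_of_nonneg_left _ (by positivity)
          rcases max_cases τ |χ| with ⟨h, _⟩ | ⟨h, _⟩ <;> rw [h]
          · nlinarith [pow_nonneg (abs_nonneg χ) k, pow_nonneg hτ.le k]
          · nlinarith [pow_nonneg (abs_nonneg χ) k, pow_nonneg hτ.le k]
  have hexp : Real.exp (-(τ - χ) ^ 2 / 2) ≤ Real.exp (χ ^ 2) * Real.exp (-(1/4) * τ ^ 2) := by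
    rw [← Real.exp_add, Real.exp_le_exp]
    nlinarith [sq_nonneg (τ - 2*χ)]
  have hpk : |(τ - χ) ^ k| ≤ 2 ^ k * (|χ| ^ k + τ ^ k) := by
    rw [abs_pow]
    calc |τ - χ| ^ k ≤ (τ + |χ|) ^ k := pow_le_pow_left₀ (abs_nonneg _) h1 k
      _ ≤ _ := h4
  have hr : τ ^ (s + (k:ℝ)) = τ ^ s * τ ^ k := by
    rw [Real.rpow_add hτ, Real.rpow_natCast]
  calc ‖τ ^ s * (τ - χ) ^ k * Real.exp (-(τ - χ) ^ 2 / 2)‖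
      = τ ^ s * |(τ - χ) ^ k| * Real.exp (-(τ - χ) ^ 2 / 2) := by
        rw [norm_eq_abs, abs_mul, abs_mul, abs_of_nonneg ht, abs_of_nonneg (Real.exp_nonneg _)]
    _ ≤ τ ^ s * (2 ^ k * (|χ| ^ k + τ ^ k)) *
          (Real.exp (χ ^ 2) * Real.exp (-(1/4) * τ ^ 2)) := by
        apply mul_le_mul _ hexp (Real.exp_nonneg _) (by positivity)
        exact mul_le_mul_of_nonneg_left hpk ht
    _ = 2 ^ k * Real.exp (χ ^ 2) *
        (|χ| ^ k * (τ ^ s * Real.exp (-(1/4) * τ ^ 2)) +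
          τ ^ (s + k) * Real.exp (-(1/4) * τ ^ 2)) := by
        rw [hr]; ring

lemma S_integrable {b : ℝ} (hb : 0 < b) (χ : ℝ) (k : ℕ) :
    IntegrableOn (fun τ : ℝ => τ ^ (b - 1) * (τ - χ) ^ k * Real.exp (-(τ - χ) ^ 2 / 2))
      (Ioi 0) := by
  have hq : (0:ℝ) < 1/4 := by norm_num
  have h1 : IntegrableOn (fun τ : ℝ => τ ^ (b-1) * Real.exp (-(1/4) * τ ^ 2)) (Ioi 0) :=
    integrableOn_rpow_mul_exp_neg_mul_sq hq (by linarith)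
  have h2 : IntegrableOn (fun τ : ℝ => τ ^ (b-1+k) * Real.exp (-(1/4) * τ ^ 2)) (Ioi 0) :=
    integrableOn_rpow_mul_exp_neg_mul_sq hq (by have := Nat.cast_nonneg (α := ℝ) k; linarith)
  have hB : IntegrableOn (fun τ : ℝ => 2 ^ k * Real.exp (χ ^ 2) *
      (|χ| ^ k * (τ ^ (b-1) * Real.exp (-(1/4) * τ ^ 2)) +
        τ ^ (b-1+k) * Real.exp (-(1/4) * τ ^ 2))) (Ioi 0) :=
    ((h1.const_mul _).add h2).const_mul _
  refine hB.mono' ?_ ?_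
  · apply ContinuousOn.aestronglyMeasurable _ measurableSet_Ioi
    apply ContinuousOn.mul (ContinuousOn.mul ?_ ?_) ?_
    · exact fun x hx => (Real.continuousAt_rpow_const x _ (Or.inl (ne_of_gt hx))).continuousWithinAt
    · exact Continuous.continuousOn (by continuity)
    · exact Continuous.continuousOn (by continuity)
  · rw [ae_restrict_iff' measurableSet_Ioi]
    exact Eventually.of_forall fun τ hτ => Sbound χ k (b-1) hτ

lemma S_tendsto (b χ : ℝ) (k : ℕ) :
    Tendsto (fun τ : ℝ => τ ^ b * (τ - χ) ^ k * Real.exp (-(τ - χ) ^ 2 / 2))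
      atTop (𝓝 0) := by
  have hq : (0:ℝ) < 1/4 := by norm_num
  have hexp : Tendsto (fun x : ℝ => Real.exp (-(1/2) * x)) atTop (𝓝 0) :=
    tendsto_exp_atBot.comp <| tendsto_id.const_mul_atTop_of_neg (neg_lt_zero.mpr one_half_pos)
  have h : ∀ s : ℝ, Tendsto (fun τ : ℝ => τ ^ s * Real.exp (-(1/4) * τ ^ 2)) atTop (𝓝 0) :=
    fun s => (rpow_mul_exp_neg_mul_sq_isLittleO_exp_neg hq s).tendsto_zero_of_tendsto hexp
  have hB : Tendsto (fun τ : ℝ => 2 ^ k * Real.exp (χ ^ 2) *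
      (|χ| ^ k * (τ ^ b * Real.exp (-(1/4) * τ ^ 2)) +
        τ ^ (b + k) * Real.exp (-(1/4) * τ ^ 2))) atTop (𝓝 0) := by
    have := (((h b).const_mul (|χ| ^ k)).add (h (b + k))).const_mul
      ((2:ℝ) ^ k * Real.exp (χ ^ 2))
    simpa using this
  refine squeeze_zero_norm' ?_ hB
  filter_upwards [eventually_gt_atTop (0:ℝ)] with τ hτ
  exact Sbound χ k b hτ

lemma S_FTC {b : ℝ} (hb : 0 < b) (χ : ℝ) (k : ℕ) :
    (b : ℝ) * (∫ τ in Ioi (0:ℝ), τ ^ (b-1) * (τ - χ) ^ k * Real.exp (-(τ - χ) ^ 2 / 2)) +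
      (k : ℝ) * ((∫ τ in Ioi (0:ℝ), τ ^ (b-1) * (τ - χ) ^ k * Real.exp (-(τ - χ) ^ 2 / 2)) +
        χ * ∫ τ in Ioi (0:ℝ), τ ^ (b-1) * (τ - χ) ^ (k-1) * Real.exp (-(τ - χ) ^ 2 / 2)) -
      χ * (∫ τ in Ioi (0:ℝ), τ ^ (b-1) * (τ - χ) ^ (k+1) * Real.exp (-(τ - χ) ^ 2 / 2)) -
      (∫ τ in Ioi (0:ℝ), τ ^ (b-1) * (τ - χ) ^ (k+2) * Real.exp (-(τ - χ) ^ 2 / 2)) = 0 := by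
  set g : ℕ → ℝ → ℝ := fun j τ => τ ^ (b-1) * (τ - χ) ^ j * Real.exp (-(τ - χ) ^ 2 / 2) with hg
  set F : ℝ → ℝ := fun τ => τ ^ b * (τ - χ) ^ k * Real.exp (-(τ - χ) ^ 2 / 2) with hF
  set Φ : ℝ → ℝ := fun τ => (b + k) * g k τ + ((k : ℝ) * χ) * g (k-1) τ - χ * g (k+1) τ
      - g (k+2) τ with hΦ
  have hderiv : ∀ τ ∈ Ioi (0:ℝ), HasDerivAt F (Φ τ) τ := by
    intro τ hτ
    rw [mem_Ioi] at hτ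
    have h1 : HasDerivAt (fun τ : ℝ => τ ^ b) (b * τ ^ (b-1)) τ :=
      Real.hasDerivAt_rpow_const (Or.inl (ne_of_gt hτ))
    have h2 : HasDerivAt (fun τ : ℝ => (τ - χ) ^ k) ((k : ℝ) * (τ - χ) ^ (k-1)) τ := by
      simpa using ((hasDerivAt_id τ).sub_const χ).fun_pow k
    have h0 : HasDerivAt (fun τ : ℝ => -(τ - χ) ^ 2 / 2) (-(τ - χ)) τ := by
      have := ((((hasDerivAt_id τ).sub_const χ).fun_pow 2).fun_neg).div_const 2
      refine this.congr_deriv (Eq.symm ?_)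
      simp; ring
    have h3 := h0.exp
    have hD := (h1.fun_mul h2).fun_mul h3
    refine hD.congr_deriv (Eq.symm ?_)
    have hrb : τ ^ b = τ ^ (b-1) * τ := by
      rw [show b = b - 1 + 1 by ring, Real.rpow_add hτ, Real.rpow_one]; ring_nf
    simp only [hΦ, hg, hrb]
    rcases k with _ | n
    · push_cast; ring
    · have hs : (n + 1) - 1 = n := rfl
      rw [hs]
      push_cast
      simp only [pow_succ]
      ring
  have hcont : ContinuousWithinAt F (Ici 0) 0 := by
    apply ContinuousOn.continuousWithinAt _ (self_mem_Ici)
    apply ContinuousOn.mul (ContinuousOn.mul ?_ ?_) ?_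
    · exact fun x hx => (continuousWithinAt_id.rpow_const (Or.inr hb.le))
    · exact Continuous.continuousOn (by continuity)
    · exact Continuous.continuousOn (by continuity)
  have hgint : ∀ j, IntegrableOn (g j) (Ioi 0) := fun j => S_integrable hb χ j
  have hint : IntegrableOn Φ (Ioi 0) := by
    apply Integrable.sub (Integrable.sub (Integrable.add ((hgint k).const_mul _)
      ((hgint (k-1)).const_mul _)) ((hgint (k+1)).const_mul _)) (hgint (k+2))
  have key := integral_Ioi_of_hasDerivAt_of_tendsto hcont hderiv hint (S_tendsto b χ k)
  have hF0 : F 0 = 0 := by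
    simp [hF, Real.zero_rpow (ne_of_gt hb)]
  rw [hF0, sub_zero] at key
  have hsplit : ∫ τ in Ioi (0:ℝ), Φ τ =
      (b + k) * (∫ τ in Ioi (0:ℝ), g k τ) + ((k:ℝ) * χ) * (∫ τ in Ioi (0:ℝ), g (k-1) τ)
        - χ * (∫ τ in Ioi (0:ℝ), g (k+1) τ) - ∫ τ in Ioi (0:ℝ), g (k+2) τ := by
    simp only [hΦ]
    have i1 : Integrable (fun τ => (b + (k:ℝ)) * g k τ) (volume.restrict (Ioi 0)) :=
      (hgint k).const_mul _
    have i2 : Integrable (fun τ => ((k:ℝ) * χ) * g (k-1) τ) (volume.restrict (Ioi 0)) :=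
      (hgint (k-1)).const_mul _
    have i3 : Integrable (fun τ => χ * g (k+1) τ) (volume.restrict (Ioi 0)) :=
      (hgint (k+1)).const_mul _
    have i12 : Integrable (fun τ => (b + (k:ℝ)) * g k τ + ((k:ℝ) * χ) * g (k-1) τ)
        (volume.restrict (Ioi 0)) := i1.add i2
    have i123 : Integrable
        (fun τ => (b + (k:ℝ)) * g k τ + ((k:ℝ) * χ) * g (k-1) τ - χ * g (k+1) τ)
        (volume.restrict (Ioi 0)) := i12.sub i3
    rw [integral_sub i123 (hgint (k+2)), integral_sub i12 i3, integral_add i1 i2,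
      integral_const_mul, integral_const_mul, integral_const_mul]
  rw [hsplit] at key
  simp only [hg] at key ⊢
  linarith [key]

end Aux

/-- The entries `k = 2, 3, 4` of Table 1 (with `μ = b - 1`):
`S₂ = b S₀ - χ S₁`, `S₃ = -(b-1)χ S₀ + (b+1+χ²) S₁`,
`S₄ = (b(b+2) + (b-1)χ²) S₀ - ((2b+1)χ + χ³) S₁`. -/
theorem S_two_three_four (b : ℝ) (hb : 0 < b) (χ : ℝ) :
    S b 2 χ = b * S b 0 χ - χ * S b 1 χ ∧
    S b 3 χ = -(b - 1) * χ * S b 0 χ + (b + 1 + χ ^ 2) * S b 1 χ ∧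
    S b 4 χ = (b * (b + 2) + (b - 1) * χ ^ 2) * S b 0 χ - ((2 * b + 1) * χ + χ ^ 3) * S b 1 χ := by
  have h0 := S_FTC hb χ 0
  have h1 := S_FTC hb χ 1
  have h2 := S_FTC hb χ 2
  unfold S
  norm_num at h0 h1 h2 ⊢
  refine ⟨?_, ?_, ?_⟩
  · linear_combination (-(1/Real.Gamma b)) * h0
  · linear_combination (χ*(1/Real.Gamma b)) * h0 - (1/Real.Gamma b) * h1
  · linear_combination (-(1/Real.Gamma b)) * h2 - ((b+2)*(1/Real.Gamma b)) * h0
      + (χ*(1/Real.Gamma b)) * h1 - (χ^2*(1/Real.Gamma b)) * h0
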